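/- Let G be a topological group with a closed normal subgroup H and a subgroup K such that G = KH and K ∩ H = {e}. For a continuous function f : H → ℝ and g = kh ∈ G (k ∈ K, h ∈ H), define g · f : H → ℝ by (g · f)(x) = f(k⁻¹xkh). Let ℛ(H) be the set of continuous functions f : H → ℝ such that the real span of {h · f : h ∈ H} is finite-dimensional. Then for every f ∈ ℛ(H) and every g ∈ G, the function g · f again belongs to ℛ(H). -/

import Mathlib

/-- `f : H → ℝ` is a representative function: it is continuous and the span of its orbit under
right translations `(h · f)(x) = f(x·h)` is finite-dimensional. -/
def IsRepresentativeFunction {G : Type*} [Group G] [TopologicalSpace G] (H : Subgroup G)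
    (f : H → ℝ) : Prop :=
  Continuous f ∧
  FiniteDimensional ℝ (Submodule.span ℝ {g : H → ℝ | ∃ h : H, g = fun x => f (x * h)})

/-- Let `G = K ⋉ H` be a topological group with `H` a closed normal subgroup
and `K` a subgroup with `G = KH`, `K ∩ H = {e}`.  For `f : H → ℝ` continuous and `g = kh ∈ G`
define `(g · f)(x) = f(k⁻¹xkh)`.  If `f` is a representative function of `H`, then so is
`g · f` (here `f'` is the function satisfying `f' x = f (k⁻¹ x k h)`, the membership
`k⁻¹xkh ∈ H` being automatic from normality of `H`). -/
theorem G_action_preserves_representative_functions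
    {G : Type*} [Group G] [TopologicalSpace G] [IsTopologicalGroup G]
    (H K : Subgroup G) [H.Normal] (hHclosed : IsClosed (H : Set G))
    (hprod : ∀ g : G, ∃ k ∈ K, ∃ h ∈ H, g = k * h) (hint : K ⊓ H = ⊥)
    (f : H → ℝ) (hf : IsRepresentativeFunction H f)
    (k : G) (hk : k ∈ K) (h : G) (hh : h ∈ H)
    (f' : H → ℝ)
    (hf' : ∀ (x y : H), (y : G) = k⁻¹ * ↑x * k * h → f' x = f y) :
    IsRepresentativeFunction H f' := by
  obtain ⟨hfc, hfd⟩ := hf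
  have hmem : ∀ x : H, k⁻¹ * (x : G) * k ∈ H := fun x => by
    have := ‹H.Normal›.conj_mem (x : G) x.2 k⁻¹
    simpa using this
  set φ : H → H := fun x => ⟨k⁻¹ * (x : G) * k, hmem x⟩ with hφ
  set hb : H := ⟨h, hh⟩ with hhb
  have key : ∀ x : H, f' x = f (φ x * hb) := fun x => by
    refine hf' x (φ x * hb) ?_
    simp [hφ, hhb, mul_assoc]
  have hφmul : ∀ a b : H, φ (a * b) = φ a * φ b := fun a b => by
    ext
    simp only [hφ, Subgroup.coe_mul]
    group
  have hφcont : Continuous φ := by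
    apply Continuous.subtype_mk
    exact (continuous_const.mul continuous_subtype_val).mul continuous_const
  have hf'eq : f' = fun x => f (φ x * hb) := funext key
  constructor
  · rw [hf'eq]
    exact hfc.comp (hφcont.mul continuous_const)
  · set T : (H → ℝ) →ₗ[ℝ] (H → ℝ) := LinearMap.funLeft ℝ ℝ φ with hT
    have hle : Submodule.span ℝ {g : H → ℝ | ∃ h' : H, g = fun x => f' (x * h')} ≤
        Submodule.map T (Submodule.span ℝ {g : H → ℝ | ∃ h' : H, g = fun x => f (x * h')}) := by
      rw [Submodule.span_le]
      rintro g ⟨h', rfl⟩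
      refine ⟨fun x => f (x * (φ h' * hb)), Submodule.subset_span ⟨φ h' * hb, rfl⟩, ?_⟩
      funext x
      simp only [hT, LinearMap.funLeft_apply]
      rw [key (x * h'), hφmul, mul_assoc]
    have : FiniteDimensional ℝ
        (Submodule.map T (Submodule.span ℝ {g : H → ℝ | ∃ h' : H, g = fun x => f (x * h')})) :=
      Module.Finite.map _ T
    exact Submodule.finiteDimensional_of_le hle
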